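/- For every n ≥ 1 and every θ ∈ [0,π/2], G'_n(θ) = 4^{1−n}·G_n(2θ). (Enumeration of blobs with one red leaf, Proposition 3.7 of the paper, in coefficient form: B^{red}(z;θ) = 4F(z/4; 2θ).) -/

import Mathlib

open MeasureTheory Real

inductive BinTree : Type
  | leaf : BinTree
  | node : BinTree → BinTree → BinTree

def BinTree.leaves : BinTree → ℕ
  | .leaf => 1
  | .node l r => l.leaves + r.leaves

noncomputable def mAngle : BinTree → ℝ → ℝ
  | .leaf, _ => 1
  | .node l r, θ =>
      ∫ α in (0:ℝ)..Real.pi, ∫ β in (0:ℝ)..Real.pi,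
        if θ < α + β ∧ α + β < Real.pi then mAngle l α * mAngle r β else 0

noncomputable def G (n : ℕ) (θ : ℝ) : ℝ :=
  ∑' τ : {τ : BinTree // τ.leaves = n}, mAngle τ.1 θ

/-- The analog of `mAngle` where all angles are constrained to `(0, π/2)`. -/
noncomputable def mAngle' : BinTree → ℝ → ℝ
  | .leaf, _ => 1
  | .node l r, θ =>
      ∫ α in (0:ℝ)..(Real.pi / 2), ∫ β in (0:ℝ)..(Real.pi / 2),
        if θ < α + β ∧ α + β < Real.pi / 2 then mAngle' l α * mAngle' r β else 0

noncomputable def G' (n : ℕ) (θ : ℝ) : ℝ :=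
  ∑' τ : {τ : BinTree // τ.leaves = n}, mAngle' τ.1 θ

lemma scale_half (f : ℝ → ℝ) :
    (∫ x in (0:ℝ)..(Real.pi/2), f (2*x)) = (2:ℝ)⁻¹ * ∫ x in (0:ℝ)..Real.pi, f x := by
  rw [intervalIntegral.integral_comp_mul_left f (two_ne_zero), mul_zero,
    show (2:ℝ) * (Real.pi/2) = Real.pi by ring, smul_eq_mul]

lemma mAngle'_scale (τ : BinTree) : ∀ θ : ℝ,
    mAngle' τ θ = (4:ℝ) ^ ((1:ℤ) - (τ.leaves:ℤ)) * mAngle τ (2*θ) := by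
  induction τ with
  | leaf => intro θ; simp [mAngle', mAngle, BinTree.leaves]
  | node l r ihl ihr =>
    intro θ
    set L := (l.leaves : ℤ)
    set R := (r.leaves : ℤ)
    set H : ℝ → ℝ → ℝ := fun u v =>
      if 2*θ < u + v ∧ u + v < Real.pi then mAngle l u * mAngle r v else 0 with hH
    have step1 : mAngle' (BinTree.node l r) θ
        = ∫ α in (0:ℝ)..(Real.pi/2), ∫ β in (0:ℝ)..(Real.pi/2),
            ((4:ℝ)^((1:ℤ)-L) * (4:ℝ)^((1:ℤ)-R)) * H (2*α) (2*β) := by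
      rw [mAngle']
      apply intervalIntegral.integral_congr
      intro α _
      apply intervalIntegral.integral_congr
      intro β _
      simp only [hH, ihl, ihr]
      have hcond : (θ < α + β ∧ α + β < Real.pi/2) ↔
          (2*θ < 2*α + 2*β ∧ 2*α + 2*β < Real.pi) := by
        constructor <;> rintro ⟨h1, h2⟩ <;> constructor <;> linarith
      rw [if_congr hcond rfl rfl]
      split_ifs with h
      · ring
      · simp
    have step2 : mAngle' (BinTree.node l r) θ
        = ((4:ℝ)^((1:ℤ)-L) * (4:ℝ)^((1:ℤ)-R)) * ((2:ℝ)⁻¹ * ((2:ℝ)⁻¹ *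
            ∫ u in (0:ℝ)..Real.pi, ∫ v in (0:ℝ)..Real.pi, H u v)) := by
      rw [step1]
      rw [show (∫ α in (0:ℝ)..(Real.pi/2), ∫ β in (0:ℝ)..(Real.pi/2),
            ((4:ℝ)^((1:ℤ)-L) * (4:ℝ)^((1:ℤ)-R)) * H (2*α) (2*β))
          = ((4:ℝ)^((1:ℤ)-L) * (4:ℝ)^((1:ℤ)-R)) *
            ∫ α in (0:ℝ)..(Real.pi/2), ∫ β in (0:ℝ)..(Real.pi/2), H (2*α) (2*β) from by
          rw [← intervalIntegral.integral_const_mul]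
          apply intervalIntegral.integral_congr
          intro α _
          exact intervalIntegral.integral_const_mul
            ((4:ℝ)^((1:ℤ)-L) * (4:ℝ)^((1:ℤ)-R)) (fun β => H (2*α) (2*β))]
      congr 1
      have inner : ∀ α : ℝ, (∫ β in (0:ℝ)..(Real.pi/2), H (2*α) (2*β))
          = (2:ℝ)⁻¹ * ∫ v in (0:ℝ)..Real.pi, H (2*α) v := fun α => scale_half _
      calc (∫ α in (0:ℝ)..(Real.pi/2), ∫ β in (0:ℝ)..(Real.pi/2), H (2*α) (2*β))
          = ∫ α in (0:ℝ)..(Real.pi/2), (2:ℝ)⁻¹ * ∫ v in (0:ℝ)..Real.pi, H (2*α) v := by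
            exact intervalIntegral.integral_congr fun α _ => inner α
        _ = (2:ℝ)⁻¹ * ∫ α in (0:ℝ)..(Real.pi/2),
              (fun u => ∫ v in (0:ℝ)..Real.pi, H u v) (2*α) := by
            rw [intervalIntegral.integral_const_mul]
        _ = (2:ℝ)⁻¹ * ((2:ℝ)⁻¹ * ∫ u in (0:ℝ)..Real.pi, ∫ v in (0:ℝ)..Real.pi, H u v) := by
            congr 1
            exact scale_half fun u => ∫ v in (0:ℝ)..Real.pi, H u v
    have h4 : (4:ℝ) ≠ 0 := by norm_num
    have key : (4:ℝ)^((1:ℤ)-L) * (4:ℝ)^((1:ℤ)-R) * ((2:ℝ)⁻¹ * ((2:ℝ)⁻¹ *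
          ∫ u in (0:ℝ)..Real.pi, ∫ v in (0:ℝ)..Real.pi, H u v))
        = (4:ℝ)^((1:ℤ)-(L+R)) * ∫ u in (0:ℝ)..Real.pi, ∫ v in (0:ℝ)..Real.pi, H u v := by
      rw [← zpow_add₀ h4, show ((1:ℤ)-L)+((1:ℤ)-R) = ((1:ℤ)-(L+R))+1 by ring,
        zpow_add₀ h4, zpow_one]
      ring
    rw [step2, key, mAngle]
    show _ = (4:ℝ)^((1:ℤ) - ((l.leaves + r.leaves : ℕ) : ℤ)) * _
    push_cast
    simp only [hH]
    rfl

theorem blob_one_red_leaf_enumeration (n : ℕ) (hn : 1 ≤ n)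
    (θ : ℝ) (hθ0 : 0 ≤ θ) (hθ : θ ≤ Real.pi / 2) :
    G' n θ = (4 : ℝ) ^ ((1 : ℤ) - (n : ℤ)) * G n (2 * θ) := by
  unfold G' G
  rw [← tsum_mul_left]
  congr 1
  funext τ
  rw [mAngle'_scale τ.1 θ, τ.2]
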